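/- There is a constant c > 0 such that the following holds. For every finite simple graph G = (V, E) with n ≥ 2 vertices and m edges, there is a partition of V into nonempty disjoint sets V₁, …, V_k such that Σ_{i=1}^{k} δ_G(V_i) ≤ m/2 and, for every 1 ≤ i ≤ k, the induced subgraph G[V_i] is a strong (c/log₂ n)-expander with respect to G. -/

import Mathlib

open Finset
open scoped Classical

set_option linter.unusedSectionVars false

noncomputable section

universe u

variable {V : Type*} [Fintype V]

/-- The degree of the vertex `v` in the graph `G`. -/
def gdeg (G : SimpleGraph V) (v : V) : ℕ :=
  (Finset.univ.filter fun u => G.Adj v u).card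

/-- The volume of a vertex set `S` in `G`: the sum of degrees of its vertices. -/
def gvol (G : SimpleGraph V) (S : Finset V) : ℕ := ∑ v ∈ S, gdeg G v

/-- The number of edges of `G` with exactly one endpoint in `S`. -/
def gcut (G : SimpleGraph V) (S : Finset V) : ℕ :=
  (Finset.univ.filter fun p : V × V => p.1 ∈ S ∧ p.2 ∉ S ∧ G.Adj p.1 p.2).card

/-- The number of edges of the induced subgraph `G[W]` with exactly one endpoint
in `S` (the other endpoint lying in `W \ S`). -/
def gcutIn (G : SimpleGraph V) (W S : Finset V) : ℕ :=
  (Finset.univ.filter fun p : V × V =>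
    p.1 ∈ S ∧ p.2 ∈ W ∧ p.2 ∉ S ∧ G.Adj p.1 p.2).card

/-- The number of edges of `G`. -/
def edgeCount (G : SimpleGraph V) : ℕ :=
  (Finset.univ.filter fun p : V × V => G.Adj p.1 p.2).card / 2

/-- The induced subgraph `G[W]` is a strong `φ`-expander with respect to `G`:
for every partition `(S, W \ S)` of `W` into two nonempty sets, the number of edges
of `G[W]` crossing the partition is at least `φ` times the minimum of the
`G`-volumes of the two sides. -/
def IsStrongInducedExpanderWrt (G : SimpleGraph V) (W : Finset V) (φ : ℝ) : Prop :=
  ∀ S ⊆ W, S.Nonempty → (W \ S).Nonempty →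
    φ * min (gvol G S : ℝ) (gvol G (W \ S) : ℝ) ≤ (gcutIn G W S : ℝ)

/-! ### Auxiliary counting notions -/

/-- Number of ordered adjacent pairs `(a, b)` with `a ∈ A`, `b ∈ B`. -/
def ecnt (G : SimpleGraph V) (A B : Finset V) : ℕ :=
  ∑ a ∈ A, ∑ b ∈ B, if G.Adj a b then 1 else 0

lemma gcutIn_eq_ecnt (G : SimpleGraph V) (W S : Finset V) :
    gcutIn G W S = ecnt G S (W \ S) := by
  rw [gcutIn, Finset.card_filter, ← Finset.univ_product_univ, Finset.sum_product, ecnt]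
  have h : ∀ a b : V, (if a ∈ S ∧ b ∈ W ∧ b ∉ S ∧ G.Adj a b then (1:ℕ) else 0)
      = (if a ∈ S then (if b ∈ W \ S then (if G.Adj a b then (1:ℕ) else 0) else 0) else 0) := by
    intro a b
    simp only [Finset.mem_sdiff]
    split_ifs <;> tauto
  simp_rw [h]
  have h2 : ∀ a : V, (∑ b : V, if a ∈ S then (if b ∈ W \ S then (if G.Adj a b then (1:ℕ) else 0) else 0) else 0)
      = if a ∈ S then (∑ b : V, if b ∈ W \ S then (if G.Adj a b then (1:ℕ) else 0) else 0) else 0 := by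
    intro a; split_ifs <;> simp
  simp_rw [h2, Finset.sum_ite_mem, Finset.univ_inter]

omit [Fintype V] in
lemma ecnt_comm (G : SimpleGraph V) (A B : Finset V) : ecnt G A B = ecnt G B A := by
  rw [ecnt, ecnt, Finset.sum_comm]
  simp_rw [G.adj_comm]

omit [Fintype V] in
lemma ecnt_union_right (G : SimpleGraph V) (A B C : Finset V) (h : Disjoint B C) :
    ecnt G A (B ∪ C) = ecnt G A B + ecnt G A C := by
  simp [ecnt, Finset.sum_union h, Finset.sum_add_distrib]

omit [Fintype V] in
lemma ecnt_empty (G : SimpleGraph V) (A : Finset V) : ecnt G A ∅ = 0 := by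
  simp [ecnt]

omit [Fintype V] in
lemma ecnt_parts {s : Finset V} (P : Finpartition s) (G : SimpleGraph V) (B : Finset V) :
    ∑ p ∈ P.parts, ecnt G p B = ecnt G s B := by
  classical
  rw [ecnt]
  conv_rhs => rw [← P.sup_parts]
  rw [Finset.sup_eq_biUnion, Finset.sum_biUnion
    (Finset.supIndep_iff_pairwiseDisjoint.mp P.supIndep)]
  rfl

/-- The crucial logarithmic inequality. -/
lemma arith_core {a b : ℝ} (ha : 1 ≤ a) (hb : 1 ≤ b) (hab : a ≤ b) :
    a + a * Real.logb 2 a + b * Real.logb 2 b ≤ (a + b) * Real.logb 2 (a + b) := by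
  have h2 : (1:ℝ) < 2 := one_lt_two
  have h1 : Real.logb 2 a ≤ Real.logb 2 ((a + b) / 2) :=
    Real.logb_le_logb_of_le h2 (by linarith) (by linarith)
  have h2' : Real.logb 2 ((a + b) / 2) = Real.logb 2 (a + b) - 1 := by
    rw [Real.logb_div (by linarith) (by norm_num)]
    simp [Real.logb_self_eq_one]
  have h3 : Real.logb 2 b ≤ Real.logb 2 (a + b) :=
    Real.logb_le_logb_of_le h2 (by linarith) (by linarith)
  have h1' : Real.logb 2 a ≤ Real.logb 2 (a + b) - 1 := by linarith
  nlinarith [h1', h3]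

lemma arith_min {a b : ℝ} (ha : 1 ≤ a) (hb : 1 ≤ b) :
    min a b + a * Real.logb 2 a + b * Real.logb 2 b ≤ (a + b) * Real.logb 2 (a + b) := by
  rcases le_total a b with h | h
  · rw [min_eq_left h]; exact arith_core ha hb h
  · rw [min_eq_right h]
    have := arith_core hb ha h
    rw [add_comm b a] at this
    linarith

/-- The main recursive decomposition lemma. -/
lemma key_lemma (G : SimpleGraph V) (φ : ℝ) (hφ : 0 < φ) :
    ∀ n (W : Finset V), W.card ≤ n → W.Nonempty →
      ∃ P : Finpartition W,
        (∀ p ∈ P.parts, IsStrongInducedExpanderWrt G p φ) ∧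
        (∑ p ∈ P.parts, (gcutIn G W p : ℝ)) ≤
          2 * φ * (gvol G W : ℝ) * Real.logb 2 (gvol G W : ℝ) := by
  intro n
  induction n with
  | zero =>
    intro W hc hne
    rw [Nat.le_zero, Finset.card_eq_zero] at hc
    simp [hc] at hne
  | succ n ih =>
    intro W hc hW
    by_cases hexp : IsStrongInducedExpanderWrt G W φ
    · refine ⟨Finpartition.indiscrete (Finset.nonempty_iff_ne_empty.mp hW), ?_, ?_⟩
      · intro p hp
        have : p = W := by
          simpa [Finpartition.indiscrete] using hp
        rwa [this]
      · have : ∑ p ∈ (Finpartition.indiscrete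
            (Finset.nonempty_iff_ne_empty.mp hW)).parts, (gcutIn G W p : ℝ)
            = (gcutIn G W W : ℝ) := by
          simp [Finpartition.indiscrete]
        rw [this, gcutIn_eq_ecnt, Finset.sdiff_self, ecnt_empty]
        rcases Nat.eq_zero_or_pos (gvol G W) with h0 | h0
        · simp [h0]
        · have h1 : (1:ℝ) ≤ (gvol G W : ℝ) := by exact_mod_cast h0
          have h2 := Real.logb_nonneg one_lt_two h1
          simp only [Nat.cast_zero]
          exact mul_nonneg (mul_nonneg (mul_nonneg (by norm_num) hφ.le)
            (Nat.cast_nonneg _)) h2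
    · rw [IsStrongInducedExpanderWrt] at hexp
      push_neg at hexp
      obtain ⟨S, hSW, hS, hWS, hcut⟩ := hexp
      have hcut0 : (0:ℝ) ≤ (gcutIn G W S : ℝ) := Nat.cast_nonneg _
      have hmin : 0 < min (gvol G S : ℝ) (gvol G (W \ S) : ℝ) := by
        by_contra h
        push_neg at h
        nlinarith [mul_nonpos_of_nonneg_of_nonpos (le_of_lt hφ) h]
      have ha1 : (1:ℝ) ≤ (gvol G S : ℝ) := by
        have h1 : (0:ℝ) < (gvol G S : ℝ) := lt_of_lt_of_le hmin (min_le_left _ _)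
        have h2 : 0 < gvol G S := by exact_mod_cast h1
        exact_mod_cast h2
      have hb1 : (1:ℝ) ≤ (gvol G (W \ S) : ℝ) := by
        have h1 : (0:ℝ) < (gvol G (W \ S) : ℝ) := lt_of_lt_of_le hmin (min_le_right _ _)
        have h2 : 0 < gvol G (W \ S) := by exact_mod_cast h1
        exact_mod_cast h2
      -- cardinalities decrease
      have hSss : S ⊂ W := by
        obtain ⟨x, hx⟩ := hWS
        rw [Finset.mem_sdiff] at hx
        exact (Finset.ssubset_iff_of_subset hSW).mpr ⟨x, hx.1, hx.2⟩
      have hWSss : W \ S ⊂ W := by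
        obtain ⟨x, hx⟩ := hS
        refine (Finset.ssubset_iff_of_subset (Finset.sdiff_subset)).mpr
          ⟨x, hSW hx, ?_⟩
        simp [Finset.mem_sdiff, hx]
      have hcS : S.card ≤ n := by
        have := Finset.card_lt_card hSss; omega
      have hcWS : (W \ S).card ≤ n := by
        have := Finset.card_lt_card hWSss; omega
      obtain ⟨P₁, hP₁e, hP₁b⟩ := ih S hcS hS
      obtain ⟨P₂, hP₂e, hP₂b⟩ := ih (W \ S) hcWS hWS
      have hdisj : Disjoint S (W \ S) := Finset.disjoint_sdiff
      have hpd : Disjoint P₁.parts P₂.parts := by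
        rw [Finset.disjoint_left]
        intro p hp hq
        obtain ⟨x, hx⟩ := P₁.nonempty_of_mem_parts hp
        have h1 : x ∈ S := P₁.le hp hx
        have h2 : x ∈ W \ S := P₂.le hq hx
        exact (Finset.mem_sdiff.mp h2).2 h1
      -- build combined partition
      refine ⟨⟨P₁.parts ∪ P₂.parts, ?_, ?_, ?_⟩, ?_, ?_⟩
      · rw [Finset.supIndep_iff_pairwiseDisjoint]
        intro x hx y hy hxy
        simp only [Finset.coe_union, Set.mem_union, Finset.mem_coe] at hx hy
        rcases hx with hx | hx <;> rcases hy with hy | hy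
        · exact Finset.supIndep_iff_pairwiseDisjoint.mp P₁.supIndep hx hy hxy
        · exact hdisj.mono (P₁.le hx) (P₂.le hy)
        · exact (hdisj.symm).mono (P₂.le hx) (P₁.le hy)
        · exact Finset.supIndep_iff_pairwiseDisjoint.mp P₂.supIndep hx hy hxy
      · rw [Finset.sup_union, P₁.sup_parts, P₂.sup_parts, Finset.sup_eq_union,
          Finset.union_sdiff_of_subset hSW]
      · simp only [Finset.mem_union, not_or]
        exact ⟨P₁.bot_notMem, P₂.bot_notMem⟩
      · intro p hp
        simp only [Finset.mem_union] at hp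
        rcases hp with hp | hp
        · exact hP₁e p hp
        · exact hP₂e p hp
      · -- the sum bound
        have hdec1 : ∀ p ∈ P₁.parts, gcutIn G W p = gcutIn G S p + ecnt G p (W \ S) := by
          intro p hp
          have hpS : p ⊆ S := P₁.le hp
          have hWp : W \ p = (S \ p) ∪ (W \ S) := by
            ext x
            simp only [Finset.mem_sdiff, Finset.mem_union]
            constructor
            · rintro ⟨hxW, hxp⟩
              by_cases hxS : x ∈ S
              · exact Or.inl ⟨hxS, hxp⟩
              · exact Or.inr ⟨hxW, hxS⟩
            · rintro (⟨h1, h2⟩ | ⟨h1, h2⟩)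
              · exact ⟨hSW h1, h2⟩
              · exact ⟨h1, fun hxp => h2 (hpS hxp)⟩
          rw [gcutIn_eq_ecnt, gcutIn_eq_ecnt, hWp,
            ecnt_union_right _ _ _ _ (hdisj.mono_left (Finset.sdiff_subset))]
        have hdec2 : ∀ p ∈ P₂.parts, gcutIn G W p = gcutIn G (W \ S) p + ecnt G p S := by
          intro p hp
          have hpS : p ⊆ W \ S := P₂.le hp
          have hWp : W \ p = ((W \ S) \ p) ∪ S := by
            ext x
            simp only [Finset.mem_sdiff, Finset.mem_union]
            constructor
            · rintro ⟨hxW, hxp⟩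
              by_cases hxS : x ∈ S
              · exact Or.inr hxS
              · exact Or.inl ⟨⟨hxW, hxS⟩, hxp⟩
            · rintro (⟨⟨h1, h2⟩, h3⟩ | h1)
              · exact ⟨h1, h3⟩
              · refine ⟨hSW h1, fun hxp => ?_⟩
                exact (Finset.mem_sdiff.mp (hpS hxp)).2 h1
          rw [gcutIn_eq_ecnt, gcutIn_eq_ecnt, hWp,
            ecnt_union_right _ _ _ _ ?_]
          exact hdisj.symm.mono_left (Finset.sdiff_subset)
        have hsum1 : ∑ p ∈ P₁.parts, (gcutIn G W p : ℝ)
            = (∑ p ∈ P₁.parts, (gcutIn G S p : ℝ)) + (ecnt G S (W \ S) : ℝ) := by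
          calc ∑ p ∈ P₁.parts, (gcutIn G W p : ℝ)
              = ∑ p ∈ P₁.parts, ((gcutIn G S p : ℝ) + (ecnt G p (W \ S) : ℝ)) :=
                Finset.sum_congr rfl fun p hp => by rw [hdec1 p hp]; push_cast; ring
            _ = _ := by rw [Finset.sum_add_distrib, ← Nat.cast_sum, ← Nat.cast_sum, ecnt_parts]
        have hsum2 : ∑ p ∈ P₂.parts, (gcutIn G W p : ℝ)
            = (∑ p ∈ P₂.parts, (gcutIn G (W \ S) p : ℝ)) + (ecnt G S (W \ S) : ℝ) := by
          calc ∑ p ∈ P₂.parts, (gcutIn G W p : ℝ)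
              = ∑ p ∈ P₂.parts, ((gcutIn G (W \ S) p : ℝ) + (ecnt G p S : ℝ)) :=
                Finset.sum_congr rfl fun p hp => by rw [hdec2 p hp]; push_cast; ring
            _ = _ := by
                rw [Finset.sum_add_distrib, ← Nat.cast_sum, ← Nat.cast_sum, ecnt_parts,
                  ecnt_comm G (W \ S) S]
        have hvol : (gvol G W : ℝ) = (gvol G S : ℝ) + (gvol G (W \ S) : ℝ) := by
          rw [← Nat.cast_add]
          congr 1
          simp only [gvol]
          rw [← Finset.sum_sdiff hSW, add_comm]
        have hcutS : (gcutIn G W S : ℝ) = (ecnt G S (W \ S) : ℝ) := by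
          rw [gcutIn_eq_ecnt]
        have hsplit : ∑ p ∈ P₁.parts ∪ P₂.parts, (gcutIn G W p : ℝ)
            = (∑ p ∈ P₁.parts, (gcutIn G W p : ℝ)) + ∑ p ∈ P₂.parts, (gcutIn G W p : ℝ) :=
          Finset.sum_union hpd
        have harith := arith_min ha1 hb1
        have hmul : 2 * φ * (min (gvol G S : ℝ) (gvol G (W \ S) : ℝ)
              + (gvol G S : ℝ) * Real.logb 2 (gvol G S : ℝ)
              + (gvol G (W \ S) : ℝ) * Real.logb 2 (gvol G (W \ S) : ℝ))
            ≤ 2 * φ * (((gvol G S : ℝ) + (gvol G (W \ S) : ℝ))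
              * Real.logb 2 ((gvol G S : ℝ) + (gvol G (W \ S) : ℝ))) :=
          mul_le_mul_of_nonneg_left harith (by positivity)
        calc ∑ p ∈ P₁.parts ∪ P₂.parts, (gcutIn G W p : ℝ)
            = (∑ p ∈ P₁.parts, (gcutIn G S p : ℝ))
              + (∑ p ∈ P₂.parts, (gcutIn G (W \ S) p : ℝ))
              + 2 * (gcutIn G W S : ℝ) := by
              rw [hsplit, hsum1, hsum2, hcutS]; ring
          _ ≤ 2 * φ * (gvol G S : ℝ) * Real.logb 2 (gvol G S : ℝ)
              + 2 * φ * (gvol G (W \ S) : ℝ) * Real.logb 2 (gvol G (W \ S) : ℝ)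
              + 2 * (φ * min (gvol G S : ℝ) (gvol G (W \ S) : ℝ)) := by
              have h2c : 2 * (gcutIn G W S : ℝ)
                  ≤ 2 * (φ * min (gvol G S : ℝ) (gvol G (W \ S) : ℝ)) := by linarith
              linarith [hP₁b, hP₂b]
          _ = 2 * φ * (min (gvol G S : ℝ) (gvol G (W \ S) : ℝ)
              + (gvol G S : ℝ) * Real.logb 2 (gvol G S : ℝ)
              + (gvol G (W \ S) : ℝ) * Real.logb 2 (gvol G (W \ S) : ℝ)) := by ring
          _ ≤ 2 * φ * (((gvol G S : ℝ) + (gvol G (W \ S) : ℝ))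
              * Real.logb 2 ((gvol G S : ℝ) + (gvol G (W \ S) : ℝ))) := hmul
          _ = 2 * φ * (gvol G W : ℝ) * Real.logb 2 (gvol G W : ℝ) := by
              rw [hvol]; ring

lemma gvol_univ (G : SimpleGraph V) :
    gvol G (Finset.univ : Finset V) = 2 * edgeCount G ∧
    (Finset.univ.filter fun p : V × V => G.Adj p.1 p.2).card = 2 * edgeCount G := by
  have hdeg : ∀ v, gdeg G v = G.degree v := by
    intro v
    rw [gdeg, SimpleGraph.degree]
    congr 1
    ext u
    simp [SimpleGraph.mem_neighborFinset]
  have hN : (Finset.univ.filter fun p : V × V => G.Adj p.1 p.2).card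
      = ∑ v, gdeg G v := by
    rw [Finset.card_filter, ← Finset.univ_product_univ, Finset.sum_product]
    refine Finset.sum_congr rfl fun v _ => ?_
    rw [gdeg, Finset.card_filter]
  have hsum : ∑ v, gdeg G v = 2 * G.edgeFinset.card := by
    simp_rw [hdeg]
    exact G.sum_degrees_eq_twice_card_edges
  have hec : edgeCount G = G.edgeFinset.card := by
    rw [edgeCount, hN, hsum]; omega
  constructor
  · rw [gvol, hsum, hec]
  · rw [hN, hsum, hec]

theorem statement3 :
    ∃ c : ℝ, 0 < c ∧
      ∀ (V : Type u) [Fintype V] (G : SimpleGraph V),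
        2 ≤ Fintype.card V →
        ∃ P : Finpartition (Finset.univ : Finset V),
          (∑ p ∈ P.parts, (gcut G p : ℝ)) ≤ (edgeCount G : ℝ) / 2 ∧
          ∀ p ∈ P.parts,
            IsStrongInducedExpanderWrt G p (c / Real.logb 2 (Fintype.card V)) := by
  refine ⟨1/16, by norm_num, ?_⟩
  intro V _ G hn
  set n := Fintype.card V with hn_def
  have hL1 : (1:ℝ) ≤ Real.logb 2 (n : ℝ) := by
    have : Real.logb 2 2 ≤ Real.logb 2 (n : ℝ) :=
      Real.logb_le_logb_of_le one_lt_two (by norm_num) (by exact_mod_cast hn)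
    simpa [Real.logb_self_eq_one] using this
  have hL0 : (0:ℝ) < Real.logb 2 (n : ℝ) := lt_of_lt_of_le one_pos hL1
  set φ := (1/16 : ℝ) / Real.logb 2 (n : ℝ) with hφ_def
  have hφ : 0 < φ := by positivity
  have huniv : (Finset.univ : Finset V).Nonempty := by
    rw [← Finset.card_pos]
    simp only [Finset.card_univ]
    omega
  obtain ⟨P, hPe, hPb⟩ := key_lemma G φ hφ (Finset.univ : Finset V).card
    Finset.univ le_rfl huniv
  refine ⟨P, ?_, hPe⟩
  have hgcut : ∀ p : Finset V, gcut G p = gcutIn G Finset.univ p := by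
    intro p; rw [gcut, gcutIn]; simp
  have hvol2m := (gvol_univ G).1
  set m := edgeCount G with hm_def
  have hsum : (∑ p ∈ P.parts, (gcut G p : ℝ)) = ∑ p ∈ P.parts, (gcutIn G Finset.univ p : ℝ) := by
    refine Finset.sum_congr rfl fun p _ => ?_
    rw [hgcut]
  rw [hsum]
  rcases Nat.eq_zero_or_pos m with hm0 | hm0
  · have : (gvol G (Finset.univ : Finset V) : ℝ) = 0 := by
      rw [hvol2m, hm0]; norm_num
    rw [this] at hPb
    simp only [Real.logb_zero, mul_zero, zero_mul] at hPb
    rw [hm0]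
    simpa using hPb
  · -- 2m ≤ n^2
    have hdegb : ∀ v : V, gdeg G v ≤ n := by
      intro v
      have : (Finset.univ.filter fun u => G.Adj v u).card ≤ Finset.univ.card :=
        Finset.card_filter_le _ _
      simpa [gdeg, Finset.card_univ] using this
    have h2mn : gvol G (Finset.univ : Finset V) ≤ n * n := by
      rw [gvol]
      calc ∑ v, gdeg G v ≤ ∑ _v : V, n := Finset.sum_le_sum fun v _ => hdegb v
        _ = n * n := by simp [Finset.card_univ, mul_comm, hn_def]
    have hvpos : (1:ℝ) ≤ (gvol G (Finset.univ : Finset V) : ℝ) := by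
      have : 1 ≤ gvol G (Finset.univ : Finset V) := by
        rw [hvol2m]; omega
      exact_mod_cast this
    have hlogle : Real.logb 2 (gvol G (Finset.univ : Finset V) : ℝ)
        ≤ 2 * Real.logb 2 (n : ℝ) := by
      have h1 : Real.logb 2 (gvol G (Finset.univ : Finset V) : ℝ)
          ≤ Real.logb 2 ((n : ℝ) * (n : ℝ)) := by
        apply Real.logb_le_logb_of_le one_lt_two (by linarith)
        exact_mod_cast h2mn
      have h2 : Real.logb 2 ((n : ℝ) * (n : ℝ)) = 2 * Real.logb 2 (n : ℝ) := by
        rw [Real.logb_mul (by positivity) (by positivity)]; ring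
      linarith
    have hvol_cast : (gvol G (Finset.univ : Finset V) : ℝ) = 2 * (m : ℝ) := by
      exact_mod_cast hvol2m
    have hbound : 2 * φ * (gvol G (Finset.univ : Finset V) : ℝ)
        * Real.logb 2 (gvol G (Finset.univ : Finset V) : ℝ) ≤ (m : ℝ) / 2 := by
      have hv0 : (0:ℝ) ≤ (gvol G (Finset.univ : Finset V) : ℝ) := by positivity
      have step1 : 2 * φ * (gvol G (Finset.univ : Finset V) : ℝ)
          * Real.logb 2 (gvol G (Finset.univ : Finset V) : ℝ)
          ≤ 2 * φ * (gvol G (Finset.univ : Finset V) : ℝ) * (2 * Real.logb 2 (n : ℝ)) := by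
        apply mul_le_mul_of_nonneg_left hlogle (by positivity)
      have hφL : φ * Real.logb 2 (n : ℝ) = 1/16 := by
        rw [hφ_def]; field_simp
      have step2 : 2 * φ * (gvol G (Finset.univ : Finset V) : ℝ) * (2 * Real.logb 2 (n : ℝ))
          = 4 * (φ * Real.logb 2 (n : ℝ)) * (2 * (m:ℝ)) := by
        rw [hvol_cast]; ring
      rw [step2, hφL] at step1
      linarith [step1]
    linarith [hPb, hbound]
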